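/- Let k be an algebraically closed field, let K₀ ⊆ K be an extension of fields with K countable, and let j : K₀ → k be a ring homomorphism. Assume there exists an uncountable subset of k which is algebraically independent over the subfield j(K₀). Then there exists a ring homomorphism J : K → k with J restricted to K₀ equal to j. -/

import Mathlib

/-- Let `k` be an algebraically closed field, `K₀ ⊆ K` an extension of fields with `K`
countable, and `j : K₀ → k` a ring homomorphism. If `k` contains an uncountable subset
algebraically independent over `j(K₀)`, then `j` extends to a ring homomorphism `K → k`. -/
theorem extend_embedding_of_uncountable_transcendence
    (k : Type*) [Field k] [IsAlgClosed k]
    (K : Type*) [Field K] [Countable K]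
    (K₀ : Subfield K)
    (j : K₀ →+* k)
    (htr : ∃ S : Set k, ¬ S.Countable ∧
      AlgebraicIndependent (j.fieldRange) ((↑) : S → k)) :
    ∃ J : K →+* k, ∀ x : K₀, J (x : K) = j x := by
  classical
  obtain ⟨S, hSunc, hSalg⟩ := htr
  -- transcendence basis of K over K₀
  obtain ⟨s, hs⟩ := exists_isTranscendenceBasis (R := K₀) (A := K)
  -- s is countable, S is not, so embed s into S
  have hsc : s.Countable := Set.Countable.mono (Set.subset_univ s) (Set.countable_univ)
  haveI : Countable s := hsc.to_subtype
  obtain ⟨g1⟩ := nonempty_embedding_nat s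
  have hSinf : S.Infinite := fun hfin => hSunc hfin.countable
  let g2 : ℕ ↪ S := hSinf.natEmbedding
  let g : s ↪ S := g1.trans g2
  -- the family in k
  set f : s → k := fun i => ((g i : k)) with hf_def
  have hfS : AlgebraicIndependent j.fieldRange f := by
    have := hSalg.comp g g.injective
    exact this
  -- transfer algebraic independence from j.fieldRange to K₀ (k as K₀-algebra via j)
  letI : Algebra K₀ k := j.toAlgebra
  have hf : AlgebraicIndependent K₀ f := by
    refine AlgebraicIndependent.of_ringHom_of_comp_eq (f := j.rangeRestrictField)
      (g := RingHom.id k) ?_ ?_ ?_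
    · simpa using hfS
    · intro a b hab
      exact j.injective (congrArg Subtype.val hab)
    · rfl
  -- the subalgebra generated by the transcendence basis
  set R0 := Algebra.adjoin K₀ (Set.range ((↑) : s → K)) with hR0
  haveI : Algebra.IsAlgebraic R0 K := hs.isAlgebraic
  -- map R0 → k
  let φ : R0 →ₐ[K₀] k := (MvPolynomial.aeval f).comp hs.1.aevalEquiv.symm.toAlgHom
  have hφinj : Function.Injective φ := by
    have h1 : Function.Injective (MvPolynomial.aeval f) :=
      algebraicIndependent_iff_injective_aeval.1 hf
    exact h1.comp hs.1.aevalEquiv.symm.injective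
  letI : Algebra R0 k := φ.toRingHom.toAlgebra
  haveI : Module.IsTorsionFree R0 K :=
    Module.isTorsionFree_iff_algebraMap_injective.2 Subtype.val_injective
  haveI : Module.IsTorsionFree R0 k :=
    Module.isTorsionFree_iff_algebraMap_injective.2 hφinj
  let J : K →ₐ[R0] k := IsAlgClosed.lift
  refine ⟨J.toRingHom, fun x => ?_⟩
  have hx : (x : K) = algebraMap R0 K (algebraMap K₀ R0 x) := rfl
  have h1 : J.toRingHom (x : K) = algebraMap R0 k (algebraMap K₀ R0 x) := by
    rw [hx]; exact J.commutes _
  rw [h1]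
  show φ (algebraMap K₀ R0 x) = j x
  rw [AlgHom.commutes]
  rfl
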